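/- Define f : ℝ → ℝ by f(r) = 30 / (9 - 31*r + Real.sqrt (81 + r*(61*r - 138))). Then f(r) > 0 for every r with 0 < r < 7/15, and f(r) tends to +∞ as r tends to 7/15 from the left (i.e. Tendsto f (nhdsWithin (7/15) (Set.Iio (7/15))) atTop). -/

import Mathlib

open Filter

lemma denom_pos (r : ℝ) (h0 : 0 < r) (h1 : r < 7/15) :
    0 < 9 - 31*r + Real.sqrt (81 + r*(61*r - 138)) := by
  have hsq : (31*r - 9)^2 < 81 + r*(61*r - 138) := by nlinarith
  have h2 : Real.sqrt ((31*r - 9)^2) < Real.sqrt (81 + r*(61*r - 138)) :=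
    Real.sqrt_lt_sqrt (sq_nonneg _) hsq
  rw [Real.sqrt_sq_eq_abs] at h2
  have := le_abs_self (31*r - 9)
  linarith

/-- Remark 2.6: the triangle resistance `R = f r` is positive for `0 < r < 7/15`
and diverges to `+∞` as `r → (7/15)⁻`. -/
theorem stmt3 :
    (∀ r : ℝ, 0 < r → r < 7/15 →
      0 < 30 / (9 - 31*r + Real.sqrt (81 + r*(61*r - 138)))) ∧
    Tendsto (fun r : ℝ => 30 / (9 - 31*r + Real.sqrt (81 + r*(61*r - 138))))
      (nhdsWithin (7/15) (Set.Iio (7/15))) atTop := by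
  constructor
  · intro r h0 h1
    exact div_pos (by norm_num) (denom_pos r h0 h1)
  · set g : ℝ → ℝ := fun r => 9 - 31*r + Real.sqrt (81 + r*(61*r - 138)) with hg
    have hcont : Continuous g := by
      apply Continuous.add
      · continuity
      · exact (Real.continuous_sqrt).comp (by continuity)
    have hval : g (7/15) = 0 := by
      have : (81 + (7/15)*(61*(7/15) - 138) : ℝ) = (82/15)^2 := by norm_num
      simp only [hg, this, Real.sqrt_sq (by norm_num : (0:ℝ) ≤ 82/15)]
      norm_num
    have htend : Tendsto g (nhdsWithin (7/15) (Set.Iio (7/15))) (nhdsWithin 0 (Set.Ioi 0)) := by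
      apply tendsto_nhdsWithin_of_tendsto_nhds_of_eventually_within
      · rw [← hval]
        exact (hcont.tendsto _).mono_left nhdsWithin_le_nhds
      · filter_upwards [Icc_mem_nhdsLT_of_mem (by norm_num : (7/15 : ℝ) ∈ Set.Ioc (1/15) (7/15)),
          self_mem_nhdsWithin] with r hr hr'
        exact denom_pos r (by linarith [hr.1]) hr'
    have hinv : Tendsto (fun r => (g r)⁻¹) (nhdsWithin (7/15) (Set.Iio (7/15))) atTop :=
      htend.inv_tendsto_nhdsGT_zero
    have : Tendsto (fun r => 30 * (g r)⁻¹) (nhdsWithin (7/15) (Set.Iio (7/15))) atTop :=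
      hinv.const_mul_atTop (by norm_num)
    simpa [div_eq_mul_inv] using this
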